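/- Under conditions (P1)–(P4), the set-valued map U is strongly-weakly upper semicontinuous: for every (ξ₀,θ₀) ∈ [0,T] × Ω₂ and every set O ⊆ Ω₁ that is open in the weak topology of Ω₁ and satisfies U(ξ₀,θ₀) ⊆ O, there exists a neighborhood N of (ξ₀,θ₀) in the norm topology of [0,T] × Ω₂ such that U(ξ,θ) ⊆ O for all (ξ,θ) ∈ N. -/

import Mathlib

open MeasureTheory Set Filter Topology
open scoped ENNReal

noncomputable section

/-- `SOL K G φ w` is the solution set `SOL(K, w + G(·), φ)` of the generalized mixed
variational inequality: all `u ∈ K` with `⟨w + G(u), v - u⟩ + φ(v) - φ(u) ≥ 0` for all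
`v ∈ K` (written without `EReal` subtraction as `φ(u) ≤ ⟨w + G(u), v - u⟩ + φ(v)`). -/
def SOL {Ω₁ : Type*} [NormedAddCommGroup Ω₁] [NormedSpace ℝ Ω₁]
    (K : Set Ω₁) (G : Ω₁ → (Ω₁ →L[ℝ] ℝ)) (φ : Ω₁ → EReal) (w : Ω₁ →L[ℝ] ℝ) : Set Ω₁ :=
  {u | u ∈ K ∧ ∀ v ∈ K, φ u ≤ ((w (v - u) + (G u) (v - u) : ℝ) : EReal) + φ v}

/-- (P1): `G` is monotone on `K` and hemicontinuous on `K`. -/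
def condP1 {Ω₁ : Type*} [NormedAddCommGroup Ω₁] [NormedSpace ℝ Ω₁]
    (K : Set Ω₁) (G : Ω₁ → (Ω₁ →L[ℝ] ℝ)) : Prop :=
  (∀ u ∈ K, ∀ v ∈ K, 0 ≤ (G v - G u) (v - u)) ∧
  (∀ u ∈ K, ∀ v ∈ K, ∀ x : Ω₁,
    ContinuousOn (fun t : ℝ => (G (u + t • (v - u))) x) (Icc (0:ℝ) 1))

/-- (P2): `φ : Ω₁ → ℝ ∪ {+∞}` (an `EReal`-valued map never taking the value `⊥`) is
proper, convex and lower semicontinuous. -/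
def condP2 {Ω₁ : Type*} [NormedAddCommGroup Ω₁] [NormedSpace ℝ Ω₁] (φ : Ω₁ → EReal) : Prop :=
  (∀ u, φ u ≠ ⊥) ∧ (∃ u, φ u ≠ ⊤) ∧
  (∀ u v : Ω₁, ∀ t : ℝ, t ∈ Icc (0:ℝ) 1 →
    φ (t • u + (1 - t) • v) ≤ (t : EReal) * φ u + ((1 - t : ℝ) : EReal) * φ v) ∧
  LowerSemicontinuous φ

/-- (P3): coercivity: there is `v* ∈ K ∩ D(φ)` with
`(⟨G(u), u - v*⟩ + φ(u) - φ(v*))/‖u‖ → +∞` as `‖u‖ → ∞`, `u ∈ K`. -/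
def condP3 {Ω₁ : Type*} [NormedAddCommGroup Ω₁] [NormedSpace ℝ Ω₁]
    (K : Set Ω₁) (G : Ω₁ → (Ω₁ →L[ℝ] ℝ)) (φ : Ω₁ → EReal) : Prop :=
  ∃ vs ∈ K, φ vs ≠ ⊤ ∧
    ∀ M : ℝ, ∃ R : ℝ, ∀ u ∈ K, R ≤ ‖u‖ →
      ((M * ‖u‖ : ℝ) : EReal) + φ vs ≤ (((G u) (u - vs) : ℝ) : EReal) + φ u

/-- (P4): `g` is continuous and bounded on `[0,T] × Ω₂`. -/
def condP4 {Ω₁ Ω₂ : Type*} [NormedAddCommGroup Ω₁] [NormedSpace ℝ Ω₁]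
    [NormedAddCommGroup Ω₂] [NormedSpace ℝ Ω₂]
    (T : ℝ) (g : ℝ → Ω₂ → (Ω₁ →L[ℝ] ℝ)) : Prop :=
  ContinuousOn (fun p : ℝ × Ω₂ => g p.1 p.2) (Icc (0:ℝ) T ×ˢ univ) ∧
  ∃ C : ℝ, ∀ ξ ∈ Icc (0:ℝ) T, ∀ θ : Ω₂, ‖g ξ θ‖ ≤ C

/-- The weak topology of a real normed space `E`: the topology induced by the
canonical map from `E` into `(E →L[ℝ] ℝ) → ℝ` (with the product topology). -/
def weakTop (E : Type*) [NormedAddCommGroup E] [NormedSpace ℝ E] : TopologicalSpace E :=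
  TopologicalSpace.induced (fun (x : E) (f : E →L[ℝ] ℝ) => f x) inferInstance

section WeakTopHelpers

open Metric

/-- inclusion into bidual, viewed as map into the weak-star dual -/
noncomputable def toWeakBidual (E : Type*) [NormedAddCommGroup E] [NormedSpace ℝ E] :
    E → WeakDual ℝ (E →L[ℝ] ℝ) :=
  fun x => NormedSpace.inclusionInDoubleDual ℝ E x

variable {E : Type*} [NormedAddCommGroup E] [NormedSpace ℝ E]

lemma weakDual_top_eq :
    (inferInstance : TopologicalSpace (WeakDual ℝ (E →L[ℝ] ℝ))) =
      TopologicalSpace.induced (fun (ψ : WeakDual ℝ (E →L[ℝ] ℝ)) (f : E →L[ℝ] ℝ) => ψ f)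
        inferInstance := rfl

lemma weakTop_eq_induced :
    weakTop E = TopologicalSpace.induced (toWeakBidual E) inferInstance :=
  calc weakTop E
      = TopologicalSpace.induced
          ((fun (ψ : WeakDual ℝ (E →L[ℝ] ℝ)) (f : E →L[ℝ] ℝ) => ψ f) ∘ toWeakBidual E)
          inferInstance := rfl
    _ = TopologicalSpace.induced (toWeakBidual E)
          (TopologicalSpace.induced (fun (ψ : WeakDual ℝ (E →L[ℝ] ℝ)) (f : E →L[ℝ] ℝ) => ψ f)
            inferInstance) := induced_compose.symm
    _ = TopologicalSpace.induced (toWeakBidual E) inferInstance :=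
        congrArg _ weakDual_top_eq.symm

lemma weakTop_isCompact_closedBall
    (hrefl : Function.Surjective ⇑(NormedSpace.inclusionInDoubleDual ℝ E)) (r : ℝ) :
    @IsCompact E (weakTop E) (closedBall (0 : E) r) := by
  have hind : @Topology.IsInducing E (WeakDual ℝ (E →L[ℝ] ℝ)) (weakTop E) _ (toWeakBidual E) :=
    @Topology.IsInducing.mk E (WeakDual ℝ (E →L[ℝ] ℝ)) (weakTop E) _ (toWeakBidual E)
      weakTop_eq_induced
  have hemb : @Topology.IsEmbedding E (WeakDual ℝ (E →L[ℝ] ℝ)) (weakTop E) _ (toWeakBidual E) :=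
    @Topology.IsEmbedding.mk E (WeakDual ℝ (E →L[ℝ] ℝ)) (weakTop E) _ (toWeakBidual E) hind
      ((NormedSpace.inclusionInDoubleDualLi ℝ (E := E)).injective)
  rw [@Topology.IsEmbedding.isCompact_iff E (WeakDual ℝ (E →L[ℝ] ℝ)) (weakTop E) _ _ _ hemb]
  have himg : toWeakBidual E '' closedBall (0 : E) r =
      ⇑WeakDual.toStrongDual ⁻¹' closedBall 0 r := by
    ext ψ
    constructor
    · rintro ⟨x, hx, rfl⟩
      have : ‖NormedSpace.inclusionInDoubleDual ℝ E x‖ = ‖x‖ :=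
        (NormedSpace.inclusionInDoubleDualLi ℝ (E := E)).norm_map x
      have h := mem_closedBall_zero_iff.mp hx
      rw [← this] at h
      exact (mem_closedBall_zero_iff (a := (WeakDual.toStrongDual (toWeakBidual E x) : StrongDual ℝ (E →L[ℝ] ℝ)))).mpr h
    · intro hψ
      obtain ⟨x, hx⟩ := hrefl (WeakDual.toStrongDual ψ)
      refine ⟨x, ?_, ?_⟩
      · have : ‖NormedSpace.inclusionInDoubleDual ℝ E x‖ = ‖x‖ :=
          (NormedSpace.inclusionInDoubleDualLi ℝ (E := E)).norm_map x
        rw [mem_closedBall_zero_iff, ← this, hx]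
        exact (mem_closedBall_zero_iff (a := (WeakDual.toStrongDual ψ : StrongDual ℝ (E →L[ℝ] ℝ)))).mp hψ
      · exact hx
  rw [himg]
  exact WeakDual.isCompact_closedBall (𝕜 := ℝ) (E := E →L[ℝ] ℝ) 0 r

lemma weakTop_continuous_clm (f : E →L[ℝ] ℝ) :
    @Continuous E ℝ (weakTop E) _ (fun x => f x) := by
  have h1 : @Continuous E ((E →L[ℝ] ℝ) → ℝ) (weakTop E) _ (fun x g => g x) :=
    @continuous_induced_dom E ((E →L[ℝ] ℝ) → ℝ) (fun x g => g x) _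
  exact @Continuous.comp E ((E →L[ℝ] ℝ) → ℝ) ℝ (weakTop E) _ _ _ _ (continuous_apply f) h1

lemma weakTop_isClosed_of_convex {C : Set E} (hconv : Convex ℝ C) (hcl : IsClosed C) :
    @IsClosed E (weakTop E) C := by
  rw [← @isOpen_compl_iff E C (weakTop E)]
  rw [@isOpen_iff_mem_nhds E (weakTop E) Cᶜ]
  intro x hx
  obtain ⟨f, u, hfx, hfC⟩ := geometric_hahn_banach_point_closed hconv hcl hx
  have hopen : @IsOpen E (weakTop E) (f ⁻¹' Iio u) :=
    @IsOpen.preimage E ℝ (weakTop E) _ _ (weakTop_continuous_clm f) _ isOpen_Iio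
  have hsub : f ⁻¹' Iio u ⊆ Cᶜ := fun z hz hzC => absurd (hfC z hzC) (not_lt.mpr (le_of_lt hz))
  exact Filter.mem_of_superset (@IsOpen.mem_nhds E (weakTop E) _ _ hopen hfx) hsub

lemma weakTop_isClosed_sublevel (φ : E → EReal) (hbot : ∀ u, φ u ≠ ⊥)
    (hconv : ∀ u v : E, ∀ t : ℝ, t ∈ Icc (0:ℝ) 1 →
      φ (t • u + (1 - t) • v) ≤ (t : EReal) * φ u + ((1 - t : ℝ) : EReal) * φ v)
    (hlsc : LowerSemicontinuous φ) (f : E →L[ℝ] ℝ) (c : ℝ) :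
    @IsClosed E (weakTop E) {x | φ x ≤ ((c - f x : ℝ) : EReal)} := by
  apply weakTop_isClosed_of_convex
  · -- convexity
    intro x hx y hy a b ha hb hab
    simp only [mem_setOf_eq] at hx hy ⊢
    have hxt : φ x ≠ ⊤ := (hx.trans_lt (EReal.coe_lt_top _)).ne
    have hyt : φ y ≠ ⊤ := (hy.trans_lt (EReal.coe_lt_top _)).ne
    set px := (φ x).toReal with hpx
    set py := (φ y).toReal with hpy
    have hφx : φ x = (px : EReal) := (EReal.coe_toReal hxt (hbot x)).symm
    have hφy : φ y = (py : EReal) := (EReal.coe_toReal hyt (hbot y)).symm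
    have hpxle : px ≤ c - f x := EReal.coe_le_coe_iff.mp (hφx ▸ hx)
    have hpyle : py ≤ c - f y := EReal.coe_le_coe_iff.mp (hφy ▸ hy)
    have hb' : b = 1 - a := by linarith
    have h1 : φ (a • x + (1 - a) • y) ≤ (a : EReal) * φ x + ((1 - a : ℝ) : EReal) * φ y :=
      hconv x y a ⟨ha, by linarith⟩
    rw [hφx, hφy, ← EReal.coe_mul, ← EReal.coe_mul, ← EReal.coe_add] at h1
    rw [hb']
    refine h1.trans ?_
    rw [EReal.coe_le_coe_iff]
    have hf : f (a • x + (1 - a) • y) = a * f x + (1 - a) * f y := by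
      simp [map_add, _root_.map_smul, smul_eq_mul]
    nlinarith [hpxle, hpyle, ha, hb, hab]
  · -- norm closedness
    rw [← isOpen_compl_iff, isOpen_iff_mem_nhds]
    intro x hx
    simp only [mem_compl_iff, mem_setOf_eq, not_le] at hx
    obtain ⟨z, hz1, hz2⟩ := exists_between hx
    have hzt : z ≠ ⊤ := (hz2.trans_le le_top).ne
    have hzb : z ≠ ⊥ := ((bot_le (a := ((c - f x : ℝ) : EReal))).trans_lt hz1).ne'
    set zr := z.toReal with hzr
    have hz : z = (zr : EReal) := (EReal.coe_toReal hzt hzb).symm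
    have h1 := hlsc x z hz2
    have hcf : Tendsto (fun y => c - f y) (𝓝 x) (𝓝 (c - f x)) :=
      ((continuous_const.sub f.continuous).tendsto x)
    have h2 : ∀ᶠ y in 𝓝 x, c - f y < zr :=
      hcf.eventually_lt_const (by rw [hz] at hz1; exact_mod_cast hz1)
    filter_upwards [h1, h2] with y hy1 hy2
    simp only [mem_compl_iff, mem_setOf_eq, not_le]
    calc ((c - f y : ℝ) : EReal) < (zr : EReal) := by exact_mod_cast hy2
      _ = z := hz.symm
      _ < φ y := hy1

end WeakTopHelpers

set_option maxHeartbeats 2000000 in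
/-- **Theorem 3.4 (i)**: `U(ξ,θ) := SOL(K, g(ξ,θ) + G(·), φ)` is strongly-weakly upper
semicontinuous on `[0,T] × Ω₂`. -/
theorem U_strongly_weakly_usc
    {Ω₁ Ω₂ : Type*} [NormedAddCommGroup Ω₁] [NormedSpace ℝ Ω₁] [CompleteSpace Ω₁]
    [TopologicalSpace.SeparableSpace Ω₁]
    [NormedAddCommGroup Ω₂] [NormedSpace ℝ Ω₂] [CompleteSpace Ω₂]
    [TopologicalSpace.SeparableSpace Ω₂]
    (hΩ₁refl : Function.Surjective ⇑(NormedSpace.inclusionInDoubleDual ℝ Ω₁))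
    (hΩ₂refl : Function.Surjective ⇑(NormedSpace.inclusionInDoubleDual ℝ Ω₂))
    (K : Set Ω₁) (hKne : K.Nonempty) (hKcl : IsClosed K) (hKcv : Convex ℝ K)
    (G : Ω₁ → (Ω₁ →L[ℝ] ℝ)) (φ : Ω₁ → EReal)
    (hP1 : condP1 K G) (hP2 : condP2 φ) (hP3 : condP3 K G φ)
    {T : ℝ} (hT : 0 < T)
    (g : ℝ → Ω₂ → (Ω₁ →L[ℝ] ℝ)) (hP4 : condP4 T g)
    : ∀ ξ₀ ∈ Icc (0:ℝ) T, ∀ θ₀ : Ω₂, ∀ O : Set Ω₁,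
      @IsOpen _ (weakTop Ω₁) O → SOL K G φ (g ξ₀ θ₀) ⊆ O →
      ∃ ε : ℝ, 0 < ε ∧ ∀ ξ ∈ Icc (0:ℝ) T, ∀ θ : Ω₂,
        |ξ - ξ₀| < ε → ‖θ - θ₀‖ < ε → SOL K G φ (g ξ θ) ⊆ O := by
  classical
  obtain ⟨hmono, hhemi⟩ := hP1
  obtain ⟨hφbot, -, hφconv, hφlsc⟩ := hP2
  obtain ⟨vs, hvsK, hvsTop, hcoerc⟩ := hP3
  obtain ⟨hgcont, C, hgbd⟩ := hP4
  set pvs := (φ vs).toReal with hpvs_def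
  have hφvs : φ vs = (pvs : EReal) := (EReal.coe_toReal hvsTop (hφbot vs)).symm
  intro ξ₀ hξ₀ θ₀ O hO hsub
  by_contra hcon
  push_neg at hcon
  have hexists : ∀ n : ℕ, ∃ q : ℝ × Ω₂ × Ω₁,
      q.1 ∈ Icc (0:ℝ) T ∧ |q.1 - ξ₀| < 1/((n:ℝ)+1) ∧ ‖q.2.1 - θ₀‖ < 1/((n:ℝ)+1) ∧
      q.2.2 ∈ SOL K G φ (g q.1 q.2.1) ∧ q.2.2 ∉ O := by
    intro n
    obtain ⟨ξ, hξ, θ, hξd, hθd, hnot⟩ := hcon (1/((n:ℝ)+1)) (by positivity)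
    obtain ⟨u, hu1, hu2⟩ := Set.not_subset.mp hnot
    exact ⟨(ξ, θ, u), hξ, hξd, hθd, hu1, hu2⟩
  choose q hq1 hq2 hq3 hq4 hq5 using hexists
  set ξ : ℕ → ℝ := fun n => (q n).1 with hξdef
  set θ : ℕ → Ω₂ := fun n => (q n).2.1 with hθdef
  set u : ℕ → Ω₁ := fun n => (q n).2.2 with hudef
  set w : ℕ → (Ω₁ →L[ℝ] ℝ) := fun n => g (ξ n) (θ n) with hwdef
  set w₀ := g ξ₀ θ₀ with hw₀
  have hC0 : 0 ≤ C := le_trans (norm_nonneg _) (hgbd ξ₀ hξ₀ θ₀)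
  have hten : Tendsto (fun n : ℕ => 1/((n:ℝ)+1)) atTop (𝓝 0) :=
    tendsto_one_div_add_atTop_nhds_zero_nat
  have htξ : Tendsto ξ atTop (𝓝 ξ₀) := by
    rw [tendsto_iff_norm_sub_tendsto_zero]
    exact squeeze_zero (fun n => norm_nonneg _)
      (fun n => by simpa [Real.norm_eq_abs] using (hq2 n).le) hten
  have htθ : Tendsto θ atTop (𝓝 θ₀) := by
    rw [tendsto_iff_norm_sub_tendsto_zero]
    exact squeeze_zero (fun n => norm_nonneg _) (fun n => (hq3 n).le) hten
  have htw : Tendsto (fun n => (ξ n, θ n)) atTop (𝓝[Icc (0:ℝ) T ×ˢ univ] (ξ₀, θ₀)) :=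
    tendsto_nhdsWithin_of_tendsto_nhds_of_eventually_within _ (htξ.prodMk_nhds htθ)
      (Filter.Eventually.of_forall fun n => ⟨hq1 n, mem_univ _⟩)
  have hwt : Tendsto w atTop (𝓝 w₀) := (hgcont (ξ₀, θ₀) ⟨hξ₀, mem_univ _⟩).tendsto.comp htw
  have hwnorm : Tendsto (fun n => ‖w n - w₀‖) atTop (𝓝 0) :=
    tendsto_iff_norm_sub_tendsto_zero.mp hwt
  -- uniform bound on solutions
  obtain ⟨R, hR⟩ := hcoerc (C + 1)
  set r := max R (C * ‖vs‖) with hrdef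
  have hbd : ∀ n, ‖u n‖ ≤ r := by
    intro n
    by_cases hcase : ‖u n‖ < R
    · exact hcase.le.trans (le_max_left _ _)
    push_neg at hcase
    have h1 := hR (u n) (hq4 n).1 hcase
    have h2 := (hq4 n).2 vs hvsK
    rw [hφvs, ← EReal.coe_add] at h2
    have hut : φ (u n) ≠ ⊤ := (h2.trans_lt (EReal.coe_lt_top _)).ne
    have hφu : φ (u n) = (((φ (u n)).toReal : ℝ) : EReal) :=
      (EReal.coe_toReal hut (hφbot _)).symm
    set pu := (φ (u n)).toReal
    rw [hφu, EReal.coe_le_coe_iff] at h2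
    rw [hφu, hφvs, ← EReal.coe_add, ← EReal.coe_add, EReal.coe_le_coe_iff] at h1
    have hwle : w n (vs - u n) ≤ C * (‖vs‖ + ‖u n‖) := by
      calc w n (vs - u n) ≤ ‖w n (vs - u n)‖ := le_abs_self _
        _ ≤ ‖w n‖ * ‖vs - u n‖ := (w n).le_opNorm _
        _ ≤ C * (‖vs‖ + ‖u n‖) := by
            apply mul_le_mul (hgbd (ξ n) (hq1 n) (θ n)) (norm_sub_le _ _)
              (norm_nonneg _) hC0
    have hGflip : G (u n) (vs - u n) = - G (u n) (u n - vs) := by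
      rw [show vs - u n = -(u n - vs) from (neg_sub _ _).symm, map_neg]
    have hfin : ‖u n‖ ≤ C * ‖vs‖ := by nlinarith [h1, h2, hwle, hGflip]
    exact hfin.trans (le_max_right _ _)
  -- weak cluster point
  have hcomp := weakTop_isCompact_closedBall (E := Ω₁) hΩ₁refl r
  have hle : Filter.map u atTop ≤ 𝓟 (Metric.closedBall (0:Ω₁) r) := by
    rw [le_principal_iff, mem_map]
    filter_upwards with n
    exact mem_closedBall_zero_iff.mpr (hbd n)
  obtain ⟨uoo, huooball, hclus⟩ :=
    @IsCompact.exists_clusterPt Ω₁ (weakTop Ω₁) _ hcomp (Filter.map u atTop) inferInstance hle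
  have hmem : ∀ Cs : Set Ω₁, @IsClosed Ω₁ (weakTop Ω₁) Cs →
      (∀ᶠ n in atTop, u n ∈ Cs) → uoo ∈ Cs := by
    intro Cs hCs hev
    letI : TopologicalSpace Ω₁ := weakTop Ω₁
    have h1 : ClusterPt uoo (𝓟 Cs) :=
      hclus.mono (le_principal_iff.mpr (mem_map.mpr hev))
    have h2 : uoo ∈ closure Cs := mem_closure_iff_clusterPt.mpr h1
    rwa [hCs.closure_eq] at h2
  have huooK : uoo ∈ K :=
    hmem K (weakTop_isClosed_of_convex hKcv hKcl)
      (Filter.Eventually.of_forall fun n => (hq4 n).1)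
  have huooO : uoo ∉ O :=
    hmem Oᶜ ((@isClosed_compl_iff Ω₁ (weakTop Ω₁) O).mpr hO) (Filter.Eventually.of_forall hq5)
  -- the Minty-type limit inequality
  have hstar : ∀ v ∈ K, φ v ≠ ⊤ →
      φ uoo ≤ ((w₀ (v - uoo) + G v (v - uoo) : ℝ) : EReal) + φ v := by
    intro v hv hvtop
    have hφv : φ v = (((φ v).toReal : ℝ) : EReal) := (EReal.coe_toReal hvtop (hφbot v)).symm
    set pv := (φ v).toReal
    have hδ : ∀ δ : ℝ, 0 < δ →
        φ uoo ≤ ((w₀ (v - uoo) + G v (v - uoo) + pv + δ : ℝ) : EReal) := by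
      intro δ hδpos
      set fv := w₀ + G v with hfvdef
      set c := fv v + pv + δ with hcdef
      have hclosed := weakTop_isClosed_sublevel φ hφbot hφconv hφlsc fv c
      have hev : ∀ᶠ n in atTop, u n ∈ {x | φ x ≤ ((c - fv x : ℝ) : EReal)} := by
        have hten2 : Tendsto (fun n => ‖w n - w₀‖ * (‖v‖ + r)) atTop (𝓝 0) := by
          simpa using hwnorm.mul_const (‖v‖ + r)
        have hsmall : ∀ᶠ n in atTop, ‖w n - w₀‖ * (‖v‖ + r) < δ :=
          hten2.eventually_lt_const hδpos
        filter_upwards [hsmall] with n hn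
        have h2 := (hq4 n).2 v hv
        rw [hφv, ← EReal.coe_add] at h2
        show φ (u n) ≤ _
        refine h2.trans ?_
        rw [EReal.coe_le_coe_iff]
        have hmon := hmono (u n) (hq4 n).1 v hv
        rw [ContinuousLinearMap.sub_apply] at hmon
        have hwn : w n (v - u n) - w₀ (v - u n) ≤ ‖w n - w₀‖ * (‖v‖ + r) := by
          have h3 : w n (v - u n) - w₀ (v - u n) = (w n - w₀) (v - u n) := by
            simp [ContinuousLinearMap.sub_apply]
          rw [h3]
          calc (w n - w₀) (v - u n) ≤ ‖(w n - w₀) (v - u n)‖ := le_abs_self _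
            _ ≤ ‖w n - w₀‖ * ‖v - u n‖ := (w n - w₀).le_opNorm _
            _ ≤ ‖w n - w₀‖ * (‖v‖ + r) := by
                apply mul_le_mul_of_nonneg_left _ (norm_nonneg _)
                exact (norm_sub_le _ _).trans (by linarith [hbd n])
        have hfvexp : c - fv (u n) = w₀ (v - u n) + G v (v - u n) + pv + δ := by
          simp only [hcdef, hfvdef, ContinuousLinearMap.add_apply, map_sub]
          ring
        rw [hfvexp]
        linarith
      have hin := hmem _ hclosed hev
      simp only [mem_setOf_eq] at hin
      refine hin.trans ?_
      rw [EReal.coe_le_coe_iff]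
      have hex : c - fv uoo = w₀ (v - uoo) + G v (v - uoo) + pv + δ := by
        simp only [hcdef, hfvdef, ContinuousLinearMap.add_apply, map_sub]
        ring
      rw [hex]
    have hut : φ uoo ≠ ⊤ := by
      intro h
      have h1 := hδ 1 one_pos
      rw [h, top_le_iff] at h1
      exact (EReal.coe_ne_top _) h1
    have hφu : φ uoo = (((φ uoo).toReal : ℝ) : EReal) := (EReal.coe_toReal hut (hφbot _)).symm
    rw [hφu, hφv, ← EReal.coe_add, EReal.coe_le_coe_iff]
    refine _root_.le_of_forall_pos_le_add fun ε hε => ?_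
    have h1 := hδ ε hε
    rw [hφu, EReal.coe_le_coe_iff] at h1
    linarith
  have huoot : φ uoo ≠ ⊤ := by
    have h1 := hstar vs hvsK hvsTop
    rw [hφvs, ← EReal.coe_add] at h1
    exact (h1.trans_lt (EReal.coe_lt_top _)).ne
  have hφuoo : φ uoo = (((φ uoo).toReal : ℝ) : EReal) := (EReal.coe_toReal huoot (hφbot _)).symm
  set puoo := (φ uoo).toReal
  -- uoo solves the limit problem
  have hSOLmem : uoo ∈ SOL K G φ w₀ := by
    refine ⟨huooK, fun v hv => ?_⟩
    by_cases hvtop : φ v = ⊤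
    · rw [hvtop, EReal.add_top_of_ne_bot (EReal.coe_ne_bot _)]
      exact le_top
    have hφv : φ v = (((φ v).toReal : ℝ) : EReal) := (EReal.coe_toReal hvtop (hφbot v)).symm
    set pv := (φ v).toReal
    have hkey : ∀ t : ℝ, t ∈ Ioc (0:ℝ) 1 →
        puoo ≤ w₀ (v - uoo) + G (uoo + t • (v - uoo)) (v - uoo) + pv := by
      intro t ht
      set vt := uoo + t • (v - uoo) with hvtdef
      have hvteq : vt = t • v + (1 - t) • uoo := by
        rw [hvtdef, smul_sub, sub_smul, one_smul]; abel
      have hvtK : vt ∈ K := by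
        rw [hvteq]
        exact hKcv hv huooK ht.1.le (by linarith [ht.2]) (by ring)
      have hφvt : φ vt ≤ ((t * pv + (1 - t) * puoo : ℝ) : EReal) := by
        have h1 := hφconv v uoo t ⟨ht.1.le, ht.2⟩
        rw [hφv, hφuoo, ← EReal.coe_mul, ← EReal.coe_mul, ← EReal.coe_add] at h1
        rw [hvteq]
        exact h1
      have hvtt : φ vt ≠ ⊤ := (hφvt.trans_lt (EReal.coe_lt_top _)).ne
      have hφvt' : φ vt = (((φ vt).toReal : ℝ) : EReal) :=
        (EReal.coe_toReal hvtt (hφbot _)).symm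
      set pvt := (φ vt).toReal
      have hs := hstar vt hvtK hvtt
      rw [hφuoo, hφvt', ← EReal.coe_add, EReal.coe_le_coe_iff] at hs
      have hsubst : vt - uoo = t • (v - uoo) := by rw [hvtdef]; exact add_sub_cancel_left _ _
      rw [hsubst, _root_.map_smul, _root_.map_smul, smul_eq_mul, smul_eq_mul] at hs
      have hpvt : pvt ≤ t * pv + (1 - t) * puoo := by
        rw [hφvt', EReal.coe_le_coe_iff] at hφvt
        exact hφvt
      have h6 : t * puoo ≤ t * (w₀ (v - uoo) + G vt (v - uoo) + pv) := by nlinarith [hs, hpvt]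
      exact le_of_mul_le_mul_left h6 ht.1
    have hcont := hhemi uoo huooK v hv (v - uoo)
    have hcwa : Tendsto (fun t : ℝ => G (uoo + t • (v - uoo)) (v - uoo)) (𝓝[Icc (0:ℝ) 1] 0)
        (𝓝 (G uoo (v - uoo))) := by
      have h1 : Tendsto (fun t : ℝ => G (uoo + t • (v - uoo)) (v - uoo)) (𝓝[Icc (0:ℝ) 1] 0)
          (𝓝 (G (uoo + (0:ℝ) • (v - uoo)) (v - uoo))) := hcont 0 ⟨le_refl 0, zero_le_one⟩
      rwa [show uoo + (0:ℝ) • (v - uoo) = uoo by simp] at h1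
    have hne : (𝓝[Ioo (0:ℝ) 1] (0:ℝ)).NeBot := left_nhdsWithin_Ioo_neBot one_pos
    have htend : Tendsto (fun t : ℝ => G (uoo + t • (v - uoo)) (v - uoo)) (𝓝[Ioo (0:ℝ) 1] 0)
        (𝓝 (G uoo (v - uoo))) := hcwa.mono_left (nhdsWithin_mono _ Ioo_subset_Icc_self)
    have hlim : puoo - w₀ (v - uoo) - pv ≤ G uoo (v - uoo) := by
      refine ge_of_tendsto htend ?_
      filter_upwards [eventually_mem_nhdsWithin] with t ht
      have h1 := hkey t ⟨ht.1, ht.2.le⟩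
      linarith
    rw [hφuoo, hφv, ← EReal.coe_add, EReal.coe_le_coe_iff]
    linarith
  exact huooO (hsub hSOLmem)
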